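/- For a > 0 and real b, c, d, e with 8(4n+5)a^{5/2} + 8a²d - 4abc + b³ = 0 failing for every nonnegative integer n and 8(4n+7)a^{5/2} + 8a²d - 4abc + b³ = 0 failing for every nonnegative integer n, the equation χ'' - (2√a x⁵ + (b/√a)x³ - ((b²-4ac)/(4a^{3/2}))x)χ' - ((4ac-b²)/(8a^{3/2}) - E + ((64a³e + 96a^{5/2}b - b⁴ + 8ab²c - 16a²c²)/(64a³))x² + ((8a²d + 40a^{5/2} + b³ - 4abc)/(8a²))x⁴)χ = 0 has no nonzero polynomial solution χ for any real E. -/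
import Mathlib

open Polynomial

private lemma coeff_helper (c : ℝ) (k m : ℕ) (p : Polynomial ℝ) :
    (C c * X ^ k * p).coeff m = c * (if k ≤ m then p.coeff (m - k) else 0) := by
  have h : C c * X ^ k * p = (C c * p) * X ^ k := by ring
  rw [h, coeff_mul_X_pow']
  split <;> simp [coeff_C_mul]

theorem no_polynomial_solution_when_criterion_fails
    (a b c d e : ℝ) (ha : 0 < a)
    (h1 : ∀ n : ℕ, 8 * (4 * (n : ℝ) + 5) * (Real.sqrt a) ^ 5
          + 8 * a ^ 2 * d - 4 * a * b * c + b ^ 3 ≠ 0)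
    (h2 : ∀ n : ℕ, 8 * (4 * (n : ℝ) + 7) * (Real.sqrt a) ^ 5
          + 8 * a ^ 2 * d - 4 * a * b * c + b ^ 3 ≠ 0) :
    ∀ E : ℝ, ¬ ∃ χ : Polynomial ℝ, χ ≠ 0 ∧ ∀ x : ℝ,
      (Polynomial.derivative (Polynomial.derivative χ)).eval x
      - (2 * Real.sqrt a * x ^ 5 + (b / Real.sqrt a) * x ^ 3
          - ((b ^ 2 - 4 * a * c) / (4 * (Real.sqrt a) ^ 3)) * x)
            * (Polynomial.derivative χ).eval x
      - ((4 * a * c - b ^ 2) / (8 * (Real.sqrt a) ^ 3) - E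
          + ((64 * a ^ 3 * e + 96 * (Real.sqrt a) ^ 5 * b - b ^ 4 + 8 * a * b ^ 2 * c
              - 16 * a ^ 2 * c ^ 2) / (64 * a ^ 3)) * x ^ 2
          + ((8 * a ^ 2 * d + 40 * (Real.sqrt a) ^ 5 + b ^ 3 - 4 * a * b * c)
              / (8 * a ^ 2)) * x ^ 4) * χ.eval x = 0 := by
  intro E
  rintro ⟨χ, hχ, hx⟩
  set s := Real.sqrt a with hs
  have hs0 : 0 < s := Real.sqrt_pos.mpr ha
  have hsa : s ^ 2 = a := Real.sq_sqrt ha.le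
  set q0 : ℝ := (4 * a * c - b ^ 2) / (8 * s ^ 3) - E with hq0
  set q2 : ℝ := (64 * a ^ 3 * e + 96 * s ^ 5 * b - b ^ 4 + 8 * a * b ^ 2 * c
      - 16 * a ^ 2 * c ^ 2) / (64 * a ^ 3) with hq2
  set K : ℝ := (8 * a ^ 2 * d + 40 * s ^ 5 + b ^ 3 - 4 * a * b * c) / (8 * a ^ 2) with hK
  set r : ℝ := (b ^ 2 - 4 * a * c) / (4 * s ^ 3) with hr
  have hpoly : derivative (derivative χ)
      - (C (2 * s) * X ^ 5 + C (b / s) * X ^ 3 - C r * X ^ 1) * derivative χ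
      - (C q0 + C q2 * X ^ 2 + C K * X ^ 4) * χ = 0 := by
    apply Polynomial.funext
    intro x
    simp only [eval_sub, eval_add, eval_mul, eval_pow, eval_C, eval_X, eval_zero]
    linear_combination hx x
  set n := χ.natDegree with hn
  have hL : χ.coeff n ≠ 0 := by
    rw [hn, ← leadingCoeff]
    exact leadingCoeff_ne_zero.mpr hχ
  have h0 := congrArg (fun p => Polynomial.coeff p (n + 4)) hpoly
  simp only [coeff_sub, coeff_add, coeff_zero] at h0
  have hG : (derivative (derivative χ)).coeff (n + 4) = 0 := by
    rw [coeff_derivative, coeff_derivative,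
      coeff_eq_zero_of_natDegree_lt (by omega : χ.natDegree < n + 4 + 1 + 1)]
    ring
  have hmul : ((C (2 * s) * X ^ 5 + C (b / s) * X ^ 3 - C r * X ^ 1) * derivative χ).coeff (n + 4)
      = (C (2 * s) * X ^ 5 * derivative χ + C (b / s) * X ^ 3 * derivative χ
        - C r * X ^ 1 * derivative χ).coeff (n + 4) := by
    congr 1; ring
  have hA : (C (2 * s) * X ^ 5 * derivative χ).coeff (n + 4) = 2 * s * ((n : ℝ) * χ.coeff n) := by
    rw [coeff_helper]
    rcases Nat.eq_zero_or_pos n with h | h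
    · rw [if_neg (by omega : ¬ 5 ≤ n + 4), h]; simp
    · rw [if_pos (by omega)]
      have : n + 4 - 5 = n - 1 := by omega
      rw [this, coeff_derivative]
      have h1 : n - 1 + 1 = n := by omega
      rw [h1]
      have : ((n - 1 : ℕ) : ℝ) + 1 = (n : ℝ) := by
        have := Nat.cast_sub (by omega : 1 ≤ n) (R := ℝ)
        push_cast [this]; ring
      rw [this]; ring
  have hB : (C (b / s) * X ^ 3 * derivative χ).coeff (n + 4) = 0 := by
    rw [coeff_helper, if_pos (by omega)]
    have : n + 4 - 3 = n + 1 := by omega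
    rw [this, coeff_derivative,
      coeff_eq_zero_of_natDegree_lt (by omega : χ.natDegree < n + 1 + 1)]
    ring
  have hC : (C r * X ^ 1 * derivative χ).coeff (n + 4) = 0 := by
    rw [coeff_helper, if_pos (by omega)]
    have : n + 4 - 1 = n + 3 := by omega
    rw [this, coeff_derivative,
      coeff_eq_zero_of_natDegree_lt (by omega : χ.natDegree < n + 3 + 1)]
    ring
  have hmul2 : ((C q0 + C q2 * X ^ 2 + C K * X ^ 4) * χ).coeff (n + 4)
      = (C q0 * χ + C q2 * X ^ 2 * χ + C K * X ^ 4 * χ).coeff (n + 4) := by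
    congr 1; ring
  have hD : (C q0 * χ).coeff (n + 4) = 0 := by
    rw [coeff_C_mul, coeff_eq_zero_of_natDegree_lt (by omega : χ.natDegree < n + 4)]
    ring
  have hE : (C q2 * X ^ 2 * χ).coeff (n + 4) = 0 := by
    rw [coeff_helper, if_pos (by omega)]
    have : n + 4 - 2 = n + 2 := by omega
    rw [this, coeff_eq_zero_of_natDegree_lt (by omega : χ.natDegree < n + 2)]
    ring
  have hF : (C K * X ^ 4 * χ).coeff (n + 4) = K * χ.coeff n := by
    rw [coeff_helper, if_pos (by omega)]
    have : n + 4 - 4 = n := by omega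
    rw [this]
  rw [hmul, hmul2] at h0
  simp only [coeff_add, coeff_sub, hA, hB, hC, hD, hE, hF, hG] at h0
  -- h0 : 0 - (2*s*(n*L) + 0 - 0) - (0 + 0 + K*L) = 0
  have hkey : 2 * s * (n : ℝ) + K = 0 := by
    rcases mul_eq_zero.mp (show (2 * s * (n : ℝ) + K) * χ.coeff n = 0 by linarith [h0]) with h | h
    · exact h
    · exact absurd h hL
  have ha' : a ≠ 0 := ne_of_gt ha
  have hmain : 8 * (2 * (n : ℝ) + 5) * s ^ 5 + 8 * a ^ 2 * d - 4 * a * b * c + b ^ 3 = 0 := by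
    rw [hK] at hkey
    field_simp at hkey
    linear_combination hkey + (16 * (n : ℝ) * s * (a + s ^ 2)) * hsa
  rcases Nat.even_or_odd n with ⟨m, hm⟩ | ⟨m, hm⟩
  · exact h1 m (by push_cast [hm] at hmain ⊢; linear_combination hmain)
  · exact h2 m (by push_cast [hm] at hmain ⊢; linear_combination hmain)
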